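/- Let D be a Grothendieck category and Q, S two localizing Serre subcategories of D such that S satisfies the Voevodsky property with respect to Q (i.e., the Q-localization of every object of S again lies in S). Then the full subcategory S^Q = { X_Q | X ∈ S } of Q-local objects is a localizing Serre subcategory of the quotient category D/Q. -/

import Mathlib

open CategoryTheory Limits

universe v u u'

variable {D : Type u} [Category.{v} D]

/-- A localizing (Serre) subcategory of an abelian category with coproducts: a class of
objects closed under isomorphisms, subobjects, quotient objects, extensions and
arbitrary direct sums. -/
def IsLocalizingSubcategory [Abelian D] [HasCoproducts.{v} D] (P : Set D) : Prop :=
  (∀ {X Y : D}, (X ≅ Y) → X ∈ P → Y ∈ P) ∧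
  (∀ {X Y : D} (f : X ⟶ Y), Mono f → Y ∈ P → X ∈ P) ∧
  (∀ {X Y : D} (f : X ⟶ Y), Epi f → X ∈ P → Y ∈ P) ∧
  (∀ S : ShortComplex D, S.ShortExact → S.X₁ ∈ P → S.X₃ ∈ P → S.X₂ ∈ P) ∧
  (∀ (ι : Type v) (f : ι → D), (∀ i, f i ∈ P) → (∐ f) ∈ P)

/-- Let `D` be a Grothendieck category and `Q`, `S` two localizing Serre subcategories,
where the quotient `D/Q` is modelled by an exact localization functor `L : D ⥤ DQ` with
fully faithful right adjoint (section) `R`, so that `Q = Ker L` and the `Q`-localization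
of `X` is `R(L(X))`. If `S` satisfies the Voevodsky property with respect to `Q`
(the `Q`-localization of every object of `S` lies again in `S`), then the full
subcategory `S^Q = { X_Q | X ∈ S }` of `D/Q` is a localizing Serre subcategory of
`D/Q`: it is closed under isomorphisms, subobjects, quotient objects, extensions and
arbitrary direct sums in `D/Q`. -/
theorem voevodsky_property_implies_localizing_image
    {DQ : Type u'} [Category.{v} DQ] [Abelian D] [Abelian DQ]
    [HasCoproducts.{v} D] [HasCoproducts.{v} DQ]
    (L : D ⥤ DQ) (R : DQ ⥤ D) (adj : L ⊣ R) [R.Full] [R.Faithful]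
    [PreservesFiniteLimits L]
    (S : Set D) (hS : IsLocalizingSubcategory S)
    (Q : Set D) (hQ : Q = {X : D | IsZero (L.obj X)}) (hQloc : IsLocalizingSubcategory Q)
    (hV : ∀ X ∈ S, R.obj (L.obj X) ∈ S) :
    IsLocalizingSubcategory {Y : DQ | ∃ X ∈ S, Nonempty (L.obj X ≅ Y)} := by

  obtain ⟨hiso, hsub, hquo, hext, hcop⟩ := hS
  haveI : L.IsLeftAdjoint := ⟨R, ⟨adj⟩⟩
  haveI : R.IsRightAdjoint := ⟨L, ⟨adj⟩⟩
  haveI : PreservesColimitsOfSize.{v, v} L := adj.leftAdjoint_preservesColimits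
  haveI : PreservesLimitsOfSize.{v, v} R := adj.rightAdjoint_preservesLimits
  -- If Y ∈ S^Q then R.obj Y ∈ S.
  have hR : ∀ Y : DQ, (∃ X ∈ S, Nonempty (L.obj X ≅ Y)) → R.obj Y ∈ S := by
    rintro Y ⟨X, hX, ⟨e⟩⟩
    exact hiso (R.mapIso e) (hV X hX)
  -- Conversely if R.obj Y ∈ S then Y ∈ S^Q (via the counit iso).
  have hL : ∀ Y : DQ, R.obj Y ∈ S → (∃ X ∈ S, Nonempty (L.obj X ≅ Y)) := fun Y hY =>
    ⟨R.obj Y, hY, ⟨asIso (adj.counit.app Y)⟩⟩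
  refine ⟨?_, ?_, ?_, ?_, ?_⟩
  · rintro X Y e ⟨W, hW, ⟨i⟩⟩
    exact ⟨W, hW, ⟨i ≪≫ e⟩⟩
  · intro X Y f hf hY
    haveI := hf
    haveI : Mono (R.map f) := preserves_mono_of_preservesLimit R f
    exact hL X (hsub (R.map f) inferInstance (hR Y hY))
  · intro X Y f hf hX
    haveI := hf
    have hRX := hR X hX
    -- image of `R.map f`
    have himg : Abelian.image (R.map f) ∈ S :=
      hquo (Abelian.factorThruImage (R.map f)) inferInstance hRX
    refine ⟨Abelian.image (R.map f), himg, ⟨?_⟩⟩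
    -- L (image.ι) ≫ counit is both mono and epi, hence iso
    haveI : Mono (Abelian.image.ι (R.map f)) := inferInstance
    haveI : Mono (L.map (Abelian.image.ι (R.map f))) :=
      preserves_mono_of_preservesLimit L _
    have hm : Mono (L.map (Abelian.image.ι (R.map f)) ≫ adj.counit.app Y) :=
      mono_comp _ _
    have he : Epi (L.map (Abelian.image.ι (R.map f)) ≫ adj.counit.app Y) := by
      have hcomp : L.map (Abelian.factorThruImage (R.map f)) ≫
          (L.map (Abelian.image.ι (R.map f)) ≫ adj.counit.app Y) =
          adj.counit.app X ≫ f := by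
        rw [← Category.assoc, ← L.map_comp, Abelian.image.fac]; exact adj.counit.naturality f
      haveI : Epi (L.map (Abelian.factorThruImage (R.map f))) :=
        preserves_epi_of_preservesColimit L _
      have : Epi (L.map (Abelian.factorThruImage (R.map f)) ≫
          (L.map (Abelian.image.ι (R.map f)) ≫ adj.counit.app Y)) := by
        rw [hcomp]; exact epi_comp _ _
      exact epi_of_epi (L.map (Abelian.factorThruImage (R.map f))) _
    haveI := hm; haveI := he
    haveI : IsIso (L.map (Abelian.image.ι (R.map f)) ≫ adj.counit.app Y) :=
      isIso_of_mono_of_epi _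
    exact asIso (L.map (Abelian.image.ι (R.map f)) ≫ adj.counit.app Y)
  · intro Sc hSc h1 h3
    haveI := hSc.mono_f
    haveI := hSc.epi_g
    haveI : Mono (R.map Sc.f) := preserves_mono_of_preservesLimit R Sc.f
    -- the short complex R Sc
    have hzero : R.map Sc.f ≫ R.map Sc.g = 0 := by
      rw [← R.map_comp, Sc.zero, R.map_zero]
    have hexact : (ShortComplex.mk (R.map Sc.f) (R.map Sc.g) hzero).Exact := by
      have := hSc.fIsKernel
      exact ShortComplex.exact_of_f_is_kernel _ (KernelFork.mapIsLimit _ this R)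
    -- the cokernel desc is mono
    have hmono := (ShortComplex.exact_iff_mono_cokernel_desc _).mp hexact
    -- cokernel (R.map Sc.f) ∈ S as a subobject of R.obj Sc.X₃
    have hcokS : cokernel (R.map Sc.f) ∈ S :=
      hsub _ hmono (hR _ h3)
    -- extension
    have hRX2 : R.obj Sc.X₂ ∈ S := by
      have hTex : (ShortComplex.mk (R.map Sc.f) (cokernel.π (R.map Sc.f))
          (cokernel.condition _)).Exact :=
        ShortComplex.exact_of_g_is_cokernel _ (cokernelIsCokernel (R.map Sc.f))
      exact hext _ (ShortComplex.ShortExact.mk' hTex inferInstance inferInstance)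
        (hR _ h1) hcokS
    exact hL _ hRX2
  · intro ι f hf
    choose W hW e using fun i => (hf i)
    have he : ∀ i, L.obj (W i) ≅ f i := fun i => (e i).some
    refine ⟨∐ W, hcop ι W hW, ⟨?_⟩⟩
    exact (PreservesCoproduct.iso L W) ≪≫ Sigma.mapIso he
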